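/- A quiver I is left rooted (i.e. the transfinite sequence of vertex subsets V_χ defined by V_0 = ∅, V_{χ+1} = { i : i is not the target of any arrow a with source s(a) ∉ ∪_{μ≤χ} V_μ }, V_χ = ∪_{μ<χ} V_μ for limit χ, exhausts all vertices) if and only if I admits no infinite sequence of composable arrows of the form ⋯ → • → • → •. -/

import Mathlib

universe u

namespace Paper

open CategoryTheory

/-- The transfinite filtration `χ ↦ ⋃_{μ ≤ χ} V_μ` of the vertex set of a quiver, where
`V_0 = ∅`, `V_{χ+1}` is the set of vertices that are not the target of any arrow whose
source lies outside `⋃_{μ ≤ χ} V_μ`, and `V_χ = ⋃_{μ < χ} V_μ` at limit ordinals. -/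
noncomputable def rootFiltration (V : Type u) [Quiver V] (χ : Ordinal.{u}) : Set V :=
  Ordinal.limitRecOn χ
    (∅ : Set V)
    (fun _ W => W ∪ { i : V | ∀ ⦃j : V⦄, (j ⟶ i) → j ∈ W })
    (fun χ' _ ih => ⋃ (μ : Ordinal.{u}) (h : μ < χ'), ih μ h)

/-- A quiver is left rooted if the transfinite sequence `V_χ` exhausts all the vertices. -/
def IsLeftRooted (V : Type u) [Quiver V] : Prop :=
  ∃ lam : Ordinal.{u}, rootFiltration V lam = Set.univ

end Paper

namespace StmtAux

open Paper

variable (V : Type u) [Quiver V]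

theorem rootFiltration_zero : rootFiltration V 0 = (∅ : Set V) :=
  Ordinal.limitRecOn_zero _ _ _

theorem rootFiltration_succ (χ : Ordinal.{u}) :
    rootFiltration V (Order.succ χ) =
      rootFiltration V χ ∪ { i : V | ∀ ⦃j : V⦄, (j ⟶ i) → j ∈ rootFiltration V χ } :=
  Ordinal.limitRecOn_succ _ _ _ _

theorem rootFiltration_limit (χ : Ordinal.{u}) (h : Order.IsSuccLimit χ) :
    rootFiltration V χ = ⋃ (μ : Ordinal.{u}) (_ : μ < χ), rootFiltration V μ :=
  Ordinal.limitRecOn_limit _ _ _ _ h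

theorem rootFiltration_mono : ∀ {χ χ' : Ordinal.{u}}, χ ≤ χ' →
    rootFiltration V χ ⊆ rootFiltration V χ' := by
  intro χ χ'
  induction χ' using Ordinal.limitRecOn with
  | zero =>
    intro h
    rw [nonpos_iff_eq_zero.mp h]
  | add_one χ' ih =>
    rw [Ordinal.add_one_eq_succ]
    intro h
    rcases lt_or_eq_of_le h with h | h
    · rw [rootFiltration_succ]
      exact (ih (Order.lt_succ_iff.mp h)).trans Set.subset_union_left
    · rw [h]
  | limit χ' hl ih =>
    intro h
    rcases lt_or_eq_of_le h with h | h
    · rw [rootFiltration_limit V χ' hl]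
      exact fun x hx => Set.mem_iUnion.mpr ⟨χ, Set.mem_iUnion.mpr ⟨h, hx⟩⟩
    · rw [h]

/-- If `i ∈ V_χ` and `j ⟶ i`, then `j ∈ V_μ` for some `μ < χ`. -/
theorem exists_lt_of_arrow : ∀ (χ : Ordinal.{u}) (i : V), i ∈ rootFiltration V χ →
    ∀ (j : V), (j ⟶ i) → ∃ μ < χ, j ∈ rootFiltration V μ := by
  intro χ
  induction χ using Ordinal.limitRecOn with
  | zero =>
    intro i hi
    rw [rootFiltration_zero] at hi
    exact absurd hi (Set.notMem_empty i)
  | add_one χ ih =>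
    rw [Ordinal.add_one_eq_succ]
    intro i hi j a
    rw [rootFiltration_succ] at hi
    rcases hi with hi | hi
    · obtain ⟨μ, hμ, hj⟩ := ih i hi j a
      exact ⟨μ, hμ.trans (Order.lt_succ _), hj⟩
    · exact ⟨χ, Order.lt_succ _, hi a⟩
  | limit χ hl ih =>
    intro i hi j a
    rw [rootFiltration_limit V χ hl] at hi
    obtain ⟨μ, hμ⟩ := Set.mem_iUnion.mp hi
    obtain ⟨hμχ, hi⟩ := Set.mem_iUnion.mp hμ
    obtain ⟨μ', hμ', hj⟩ := ih μ hμχ i hi j a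
    exact ⟨μ', hμ'.trans hμχ, hj⟩

end StmtAux

open Paper in
/-- A quiver is left rooted if and only if it admits no infinite sequence of composable
arrows of the form `⋯ → • → • → •`. -/
theorem stmt6 (V : Type u) [Quiver V] :
    IsLeftRooted V ↔ ¬ ∃ f : ℕ → V, ∀ n : ℕ, Nonempty (f (n + 1) ⟶ f n) := by
  constructor
  · rintro ⟨lam, hlam⟩ ⟨f, hf⟩
    -- rank of a vertex: least χ with i ∈ V_χ
    have hne : ∀ i : V, {χ : Ordinal.{u} | i ∈ rootFiltration V χ}.Nonempty := by
      intro i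
      exact ⟨lam, show i ∈ rootFiltration V lam by rw [hlam]; trivial⟩
    set rk : V → Ordinal.{u} := fun i => sInf {χ | i ∈ rootFiltration V χ} with hrk
    have hmem : ∀ i : V, i ∈ rootFiltration V (rk i) := fun i => csInf_mem (hne i)
    have hdec : ∀ n : ℕ, rk (f (n + 1)) < rk (f n) := by
      intro n
      obtain ⟨a⟩ := hf n
      obtain ⟨μ, hμ, hj⟩ := StmtAux.exists_lt_of_arrow V (rk (f n)) (f n) (hmem (f n))
        (f (n + 1)) a
      exact lt_of_le_of_lt (csInf_le' hj) hμ
    exact (RelEmbedding.natGT (fun n => rk (f n)) hdec).not_wellFounded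
      wellFounded_lt
  · intro h
    set r : V → V → Prop := fun j i => Nonempty (j ⟶ i) with hr
    have wf : WellFounded r := by
      constructor
      by_contra hx
      push_neg at hx
      obtain ⟨x, hx⟩ := hx
      have key : ∀ y : {a : V // ¬Acc r a}, ∃ z : {a : V // ¬Acc r a}, r z.1 y.1 := by
        rintro ⟨y, hy⟩
        obtain ⟨b, hb1, hb2⟩ := exists_not_acc_lt_of_not_acc hy
        exact ⟨⟨b, hb1⟩, hb2⟩
      choose g hg using key
      refine h ⟨fun n => ((g^[n] ⟨x, hx⟩) : {a : V // ¬Acc r a}).1, fun n => ?_⟩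
      have := hg (g^[n] ⟨x, hx⟩)
      rw [← Function.iterate_succ_apply' g n] at this
      exact this
    haveI : IsWellFounded V r := ⟨wf⟩
    set rk : V → Ordinal.{u} := IsWellFounded.rank r with hrkdef
    have key : ∀ i : V, i ∈ rootFiltration V (Order.succ (rk i)) := by
      intro i
      induction i using IsWellFounded.induction r with
      | ind i ih =>
        rw [StmtAux.rootFiltration_succ]
        right
        intro j a
        have hlt : rk j < rk i := IsWellFounded.rank_lt_of_rel (⟨a⟩ : r j i)
        exact StmtAux.rootFiltration_mono V (Order.succ_le_of_lt hlt) (ih j ⟨a⟩)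
    refine ⟨Ordinal.lsub.{u, u} rk, ?_⟩
    apply Set.eq_univ_of_forall
    intro i
    exact StmtAux.rootFiltration_mono V
      (Order.succ_le_of_lt (Ordinal.lt_lsub rk i)) (key i)
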